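/- arXiv:1610.09320 — 2 statements merged into one kernel-verified Lean document; each statement's English description precedes it below -/
import Mathlib

section
/- Let G' ⊆ G with SP(G') = SP(G). Then G is vulnerable if and only if G' is vulnerable. -/
/-- A directed multigraph: a type of vertices, a type of edges,
and source/target maps. -/
structure MultiDigraph (V E : Type) where
  src : E → V
  tgt : E → V

namespace MultiDigraph

variable {V E : Type}

/-- `G.IsWalk u p v` : the list of edges `p` forms a walk from `u` to `v`. -/
def IsWalk (G : MultiDigraph V E) : V → List E → V → Prop
  | u, [], v => u = v
  | u, e :: p, v => G.src e = u ∧ IsWalk G (G.tgt e) p v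

/-- The list of vertices visited by a walk starting at `u` with edges `p`. -/
def walkVerts (G : MultiDigraph V E) : V → List E → List V
  | u, [] => [u]
  | u, e :: p => u :: walkVerts G (G.tgt e) p

/-- A simple path: a walk repeating no vertex. -/
def IsSimplePath (G : MultiDigraph V E) (u : V) (p : List E) (v : V) : Prop :=
  G.IsWalk u p v ∧ (G.walkVerts u p).Nodup

/-- The set of simple `st`-paths using only edges from `F`. -/
def SP (G : MultiDigraph V E) (F : Set E) (s t : V) : Set (List E) :=
  {p | G.IsSimplePath s p t ∧ ∀ e ∈ p, e ∈ F}

/-- An edge is irredundant if it lies on some simple `st`-path. -/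
def EdgeIrredundant (G : MultiDigraph V E) (s t : V) (e : E) : Prop :=
  ∃ p, G.IsSimplePath s p t ∧ e ∈ p

/-- A vertex is irredundant if it lies on some simple `st`-path. -/
def VertexIrredundant (G : MultiDigraph V E) (s t : V) (x : V) : Prop :=
  ∃ p, G.IsSimplePath s p t ∧ x ∈ G.walkVerts s p

/-- A net is `st`-connected if every vertex lies on some `st`-path. -/
def STConnected (G : MultiDigraph V E) (s t : V) : Prop :=
  ∀ x : V, ∃ p, G.IsWalk s p t ∧ x ∈ G.walkVerts s p

end MultiDigraph

namespace MultiDigraph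

variable {V E : Type} [DecidableEq E]

/-- The flow induced on an edge by a flow on simple `st`-paths. -/
noncomputable def edgeFlow (G : MultiDigraph V E) (F : Set E) (s t : V)
    (φ : List E → ℝ) (e : E) : ℝ :=
  ∑' p : G.SP F s t, if e ∈ (p : List E) then φ p else 0

/-- The latency of a path under a flow: the sum of the edge latencies at the
induced edge flows. -/
noncomputable def pathLatency (G : MultiDigraph V E) (F : Set E) (s t : V)
    (l : E → ℝ → ℝ) (φ : List E → ℝ) (p : List E) : ℝ :=
  (p.map (fun e => l e (G.edgeFlow F s t φ e))).sum

/-- A Wardrop flow for the instance given by the subgraph `F` of `G`, traffic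
value `r` and latencies `l`. -/
structure IsWardrop (G : MultiDigraph V E) (F : Set E) (s t : V) (r : ℝ)
    (l : E → ℝ → ℝ) (φ : List E → ℝ) : Prop where
  nonneg : ∀ p, 0 ≤ φ p
  support : ∀ p, p ∉ G.SP F s t → φ p = 0
  value : ∑' p : G.SP F s t, φ (p : List E) = r
  equil : ∀ p q, G.IsWalk s p t → (∀ e ∈ p, e ∈ F) →
    G.IsWalk s q t → (∀ e ∈ q, e ∈ F) → 0 < φ p →
    G.pathLatency F s t l φ p ≤ G.pathLatency F s t l φ q

/-- `L` is the common latency at Wardrop equilibrium of the instance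
(`0` in case `r = 0`). -/
def EqLat (G : MultiDigraph V E) (F : Set E) (s t : V) (r : ℝ)
    (l : E → ℝ → ℝ) (L : ℝ) : Prop :=
  (r = 0 ∧ L = 0) ∨
  ∃ φ p, G.IsWardrop F s t r l φ ∧ 0 < φ p ∧ G.pathLatency F s t l φ p = L

/-- Latency functions are continuous and non-decreasing. -/
def GoodLatency {E : Type} (l : E → ℝ → ℝ) : Prop :=
  ∀ e, Continuous (l e) ∧ Monotone (l e)

/-- The (sub)net given by the edge set `F` of `G` is vulnerable: for some
traffic value, latencies and subgraph `H`, the Wardrop latency of `H` is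
strictly smaller than that of `F`. -/
def Vulnerable (G : MultiDigraph V E) (F : Set E) (s t : V) : Prop :=
  ∃ (r : ℝ) (l : E → ℝ → ℝ) (H : Set E),
    0 ≤ r ∧ GoodLatency l ∧ H ⊆ F ∧
    ∃ LG LH, G.EqLat F s t r l LG ∧ G.EqLat H s t r l LH ∧ LH < LG

end MultiDigraph
namespace MultiDigraph

variable {V E : Type}

lemma isWalk_append (G : MultiDigraph V E) {u v w : V} {p q : List E}
    (hp : G.IsWalk u p v) (hq : G.IsWalk v q w) : G.IsWalk u (p ++ q) w := by
  induction p generalizing u with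
  | nil => exact (show u = v from hp) ▸ hq
  | cons e p ih => exact ⟨hp.1, ih hp.2⟩

lemma isWalk_split_edge (G : MultiDigraph V E) {u v : V} {p : List E}
    (hp : G.IsWalk u p v) {e : E} (he : e ∈ p) :
    ∃ p1 p2, p = p1 ++ e :: p2 ∧ G.IsWalk u p1 (G.src e) ∧ G.IsWalk (G.tgt e) p2 v := by
  induction p generalizing u with
  | nil => cases he
  | cons f p ih =>
    rcases List.mem_cons.mp he with rfl | he'
    · exact ⟨[], p, rfl, hp.1.symm, hp.2⟩
    · obtain ⟨p1, p2, rfl, h1, h2⟩ := ih hp.2 he'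
      exact ⟨f :: p1, p2, rfl, ⟨hp.1, h1⟩, h2⟩

end MultiDigraph
namespace MultiDigraph

variable {V E : Type} [DecidableEq E]

lemma edgeFlow_congr (G : MultiDigraph V E) {F1 F2 : Set E} {s t : V}
    (h : G.SP F1 s t = G.SP F2 s t) (φ : List E → ℝ) :
    G.edgeFlow F1 s t φ = G.edgeFlow F2 s t φ := by
  funext e; unfold edgeFlow; rw [h]

lemma pathLatency_congr (G : MultiDigraph V E) {F1 F2 : Set E} {s t : V}
    (h : G.SP F1 s t = G.SP F2 s t) (l : E → ℝ → ℝ) (φ : List E → ℝ) (p : List E) :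
    G.pathLatency F1 s t l φ p = G.pathLatency F2 s t l φ p := by
  unfold pathLatency; rw [edgeFlow_congr G h φ]

lemma eqLat_mono (G : MultiDigraph V E) {s t : V} {F1 F2 : Set E} (h21 : F2 ⊆ F1)
    (hSP : G.SP F2 s t = G.SP F1 s t) {r : ℝ} {l : E → ℝ → ℝ} {L : ℝ}
    (hE : G.EqLat F1 s t r l L) : G.EqLat F2 s t r l L := by
  rcases hE with h | ⟨φ, p0, hW, hp0, hlat⟩
  · exact Or.inl h
  · refine Or.inr ⟨φ, p0, ⟨hW.nonneg, fun p hp => hW.support p (hSP ▸ hp), ?_, ?_⟩, hp0, ?_⟩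
    · rw [show (∑' p : G.SP F2 s t, φ (p : List E)) = ∑' p : G.SP F1 s t, φ (p : List E) by
        rw [hSP]]
      exact hW.value
    · intro p q hp hpF hq hqF hφ
      rw [pathLatency_congr G hSP, pathLatency_congr G hSP]
      exact hW.equil p q hp (fun e he => h21 (hpF e he)) hq (fun e he => h21 (hqF e he)) hφ
    · rw [pathLatency_congr G hSP]; exact hlat

lemma SP_inter (G : MultiDigraph V E) {s t : V} {H F F' : Set E}
    (hHF : H ⊆ F) (hSP : G.SP F' s t = G.SP F s t) :
    G.SP (H ∩ F') s t = G.SP H s t := by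
  ext p
  constructor
  · rintro ⟨hsp, hmem⟩; exact ⟨hsp, fun e he => (hmem e he).1⟩
  · rintro ⟨hsp, hmem⟩
    refine ⟨hsp, fun e he => ⟨hmem e he, ?_⟩⟩
    have hpF : p ∈ G.SP F s t := ⟨hsp, fun e he => hHF (hmem e he)⟩
    rw [← hSP] at hpF
    exact hpF.2 e he

end MultiDigraph
namespace MultiDigraph

open Classical in
lemma eqLat_extend {V E : Type} [DecidableEq E] (G : MultiDigraph V E) {s t : V}
    {F' F : Set E} (hsub : F' ⊆ F) (hSP : G.SP F' s t = G.SP F s t)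
    {r : ℝ} {l : E → ℝ → ℝ} (hl : GoodLatency l) {LG : ℝ}
    (hE : G.EqLat F' s t r l LG) :
    ∃ l' : E → ℝ → ℝ, GoodLatency l' ∧ G.EqLat F s t r l' LG ∧
      ∀ (H : Set E), H ⊆ F' → ∀ LH, G.EqLat H s t r l LH → G.EqLat H s t r l' LH := by
  rcases hE with h | ⟨φ, p0, hW, hp0, hlat⟩
  · exact ⟨l, hl, Or.inl h, fun H _ LH h' => h'⟩
  -- the fixed edge latencies at equilibrium
  set le : E → ℝ := fun e => l e (G.edgeFlow F' s t φ e) with hle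
  -- p0 is a simple path used by the flow
  have hp0SP : p0 ∈ G.SP F' s t := by
    by_contra h
    exact absurd hp0 (by rw [hW.support p0 h]; exact lt_irrefl 0)
  have hp0w : G.IsWalk s p0 t := hp0SP.1.1
  have hp0F' : ∀ e ∈ p0, e ∈ F' := hp0SP.2
  have hmin : ∀ q, G.IsWalk s q t → (∀ e ∈ q, e ∈ F') → LG ≤ (q.map le).sum := by
    intro q hq hqF
    have := hW.equil p0 q hp0w hp0F' hq hqF hp0
    rw [hlat] at this
    exact this
  have hLGp0 : ((p0.map le).sum) = LG := hlat
  -- good edges and good vertices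
  set Good : E → Prop := fun e => ∃ q, G.IsWalk s q t ∧ (∀ e' ∈ q, e' ∈ F') ∧ e ∈ q
    with hGood
  have hGoodF' : ∀ e, Good e → e ∈ F' := by
    rintro e ⟨q, _, hqF, he⟩; exact hqF e he
  set GoodV : V → Prop := fun v => ∃ q1 q2, G.IsWalk s q1 v ∧ G.IsWalk v q2 t ∧
      (∀ e ∈ q1, e ∈ F') ∧ (∀ e ∈ q2, e ∈ F') with hGoodV
  -- the set of costs of good walks to t, and the potential B
  set S : V → Set ℝ := fun v => {c | ∃ w, G.IsWalk v w t ∧ (∀ e ∈ w, Good e) ∧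
      (w.map le).sum = c} with hS
  have hSne : ∀ v, GoodV v → (S v).Nonempty := by
    rintro v ⟨q1, q2, h1, h2, hF1, hF2⟩
    refine ⟨(q2.map le).sum, q2, h2, ?_, rfl⟩
    intro e he
    exact ⟨q1 ++ q2, isWalk_append G h1 h2,
      fun e' he' => (List.mem_append.mp he').elim (hF1 e') (hF2 e'),
      List.mem_append_right _ he⟩
  have hSbdd : ∀ v, GoodV v → BddBelow (S v) := by
    rintro v ⟨q1, q2, h1, h2, hF1, hF2⟩
    refine ⟨LG - (q1.map le).sum, ?_⟩
    rintro c ⟨w, hw, hwG, rfl⟩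
    have h3 := hmin (q1 ++ w) (isWalk_append G h1 hw)
      (fun e he => (List.mem_append.mp he).elim (hF1 e) (fun h => hGoodF' e (hwG e h)))
    rw [List.map_append, List.sum_append] at h3
    linarith
  set B : V → ℝ := fun v => if GoodV v then sInf (S v) else 0 with hB
  have hBgood : ∀ v, GoodV v → B v = sInf (S v) := fun v hv => if_pos hv
  -- (1) B t ≤ 0
  have hGt : GoodV t := ⟨p0, [], hp0w, rfl, hp0F', by simp⟩
  have hBt : B t ≤ 0 := by
    rw [hBgood t hGt]
    exact csInf_le (hSbdd t hGt) ⟨[], rfl, by simp, by simp⟩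
  -- (2) LG ≤ B s
  have hGs : GoodV s := ⟨[], p0, rfl, hp0w, by simp, hp0F'⟩
  have hBs : LG ≤ B s := by
    rw [hBgood s hGs]
    refine le_csInf (hSne s hGs) ?_
    rintro c ⟨w, hw, hwG, rfl⟩
    exact hmin w hw (fun e he => hGoodF' e (hwG e he))
  -- (3) per-edge inequality for good edges
  have hkey : ∀ e, Good e → B (G.src e) ≤ le e + B (G.tgt e) := by
    rintro e ⟨q, hq, hqF, heq⟩
    obtain ⟨q1, q2, rfl, h1, h2⟩ := isWalk_split_edge G hq heq
    have hF1 : ∀ e' ∈ q1, e' ∈ F' := fun e' h => hqF e' (List.mem_append_left _ h)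
    have hF2 : ∀ e' ∈ q2, e' ∈ F' := fun e' h =>
      hqF e' (List.mem_append_right _ (List.mem_cons_of_mem _ h))
    have hGsrc : GoodV (G.src e) := ⟨q1, e :: q2, h1, ⟨rfl, h2⟩, hF1, fun e' h =>
      hqF e' (List.mem_append_right _ h)⟩
    have hGtgt : GoodV (G.tgt e) := ⟨q1 ++ [e], q2, isWalk_append G h1 ⟨rfl, rfl⟩, h2,
      fun e' h => (List.mem_append.mp h).elim (hF1 e')
        (fun h' => by rw [List.mem_singleton.mp h']; exact hqF e (List.mem_append_right _ List.mem_cons_self)),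
      hF2⟩
    have heGood : Good e := ⟨q1 ++ e :: q2, hq, hqF, heq⟩
    rw [hBgood _ hGsrc, hBgood _ hGtgt]
    have step : ∀ c ∈ S (G.tgt e), sInf (S (G.src e)) - le e ≤ c := by
      rintro c ⟨w, hw, hwG, rfl⟩
      have hmem : (le e + (w.map le).sum) ∈ S (G.src e) := by
        refine ⟨e :: w, ⟨rfl, hw⟩, ?_, by simp⟩
        intro e' he'
        rcases List.mem_cons.mp he' with rfl | h'
        · exact heGood
        · exact hwG e' h'
      have := csInf_le (hSbdd _ hGsrc) hmem
      linarith
    have := le_csInf (hSne _ hGtgt) step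
    linarith
  -- the modified latencies
  set l' : E → ℝ → ℝ := fun e => if Good e then l e else fun _ => B (G.src e) - B (G.tgt e)
    with hl'
  have hl'good : GoodLatency l' := by
    intro e
    by_cases hg : Good e
    · simp only [hl', if_pos hg]; exact hl e
    · simp only [hl', if_neg hg]; exact ⟨continuous_const, monotone_const⟩
  have hEF : G.edgeFlow F s t φ = G.edgeFlow F' s t φ := edgeFlow_congr G hSP.symm φ
  set le' : E → ℝ := fun e => l' e (G.edgeFlow F s t φ e) with hle'
  have hle'good : ∀ e, Good e → le' e = le e := by
    intro e hg
    simp only [hle', hle, hl', if_pos hg, hEF]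
  have hedge : ∀ e, B (G.src e) - B (G.tgt e) ≤ le' e := by
    intro e
    by_cases hg : Good e
    · rw [hle'good e hg]; have := hkey e hg; linarith
    · simp only [hle', hl', if_neg hg]; exact le_refl _
  -- (4) every walk to t has cost at least the potential difference
  have hwalkbound : ∀ (w : List E) (u : V), G.IsWalk u w t → B u - B t ≤ (w.map le').sum := by
    intro w
    induction w with
    | nil => intro u hu; rw [show u = t from hu]; simp
    | cons e w ih =>
      intro u hu
      have h1 := hedge e
      have h2 := ih (G.tgt e) hu.2
      rw [← hu.1]
      simp only [List.map_cons, List.sum_cons]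
      linarith
  -- path latencies of good-edged walks agree with the original ones
  have hgoodeq : ∀ q : List E, (∀ e ∈ q, Good e) →
      G.pathLatency F s t l' φ q = (q.map le).sum := by
    intro q hq
    show (q.map le').sum = (q.map le).sum
    rw [List.map_congr_left (fun e he => hle'good e (hq e he))]
  refine ⟨l', hl'good, Or.inr ⟨φ, p0, ⟨hW.nonneg, ?_, ?_, ?_⟩, hp0, ?_⟩, ?_⟩
  · -- support
    intro p hp
    refine hW.support p ?_
    rw [hSP]; exact hp
  · -- value
    rw [show (∑' p : G.SP F s t, φ (p : List E)) = ∑' p : G.SP F' s t, φ (p : List E) by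
      rw [hSP]]
    exact hW.value
  · -- equil
    intro p q hpw hpF hqw hqF hφp
    have hpSP : p ∈ G.SP F' s t := by
      by_contra h
      exact absurd hφp (by rw [hW.support p h]; exact lt_irrefl 0)
    have hpG : ∀ e ∈ p, Good e := fun e he => ⟨p, hpSP.1.1, hpSP.2, he⟩
    have h1 : G.pathLatency F s t l' φ p ≤ LG := by
      rw [hgoodeq p hpG]
      have := hW.equil p p0 hpSP.1.1 hpSP.2 hp0w hp0F' hφp
      rw [hlat] at this
      exact this
    have h2 : LG ≤ G.pathLatency F s t l' φ q := by
      have := hwalkbound q s hqw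
      show LG ≤ (q.map le').sum
      linarith
    linarith
  · -- latency of p0
    have hpG : ∀ e ∈ p0, Good e := fun e he => ⟨p0, hp0w, hp0F', he⟩
    rw [hgoodeq p0 hpG]
    exact hLGp0
  · -- preservation for subgraphs of F'
    intro H hHF' LH hEH
    rcases hEH with h | ⟨ψ, q0, hWH, hq0, hlatH⟩
    · exact Or.inl h
    have hHlat : ∀ q, G.IsWalk s q t → (∀ e ∈ q, e ∈ H) →
        G.pathLatency H s t l' ψ q = G.pathLatency H s t l ψ q := by
      intro q hqw hqH
      have hqG : ∀ e ∈ q, Good e := fun e he => ⟨q, hqw, fun e' he' => hHF' (hqH e' he'), he⟩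
      show (q.map (fun e => l' e (G.edgeFlow H s t ψ e))).sum
        = (q.map (fun e => l e (G.edgeFlow H s t ψ e))).sum
      refine congrArg _ (List.map_congr_left ?_)
      intro e he
      simp only [hl', if_pos (hqG e he)]
    have hq0SP : q0 ∈ G.SP H s t := by
      by_contra h
      exact absurd hq0 (by rw [hWH.support q0 h]; exact lt_irrefl 0)
    refine Or.inr ⟨ψ, q0, ⟨hWH.nonneg, hWH.support, hWH.value, ?_⟩, hq0, ?_⟩
    · intro p q hpw hpH hqw hqH hφp
      rw [hHlat p hpw hpH, hHlat q hqw hqH]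
      exact hWH.equil p q hpw hpH hqw hqH hφp
    · rw [hHlat q0 hq0SP.1.1 hq0SP.2]
      exact hlatH

end MultiDigraph
open MultiDigraph in
/-- If `G' ⊆ G` and `SP(G') = SP(G)`, then `G` is vulnerable iff `G'` is. -/
theorem stmt5 {V E : Type} [DecidableEq E] (G : MultiDigraph V E) (s t : V)
    (F F' : Set E) (hsub : F' ⊆ F) (hSP : G.SP F' s t = G.SP F s t) :
    G.Vulnerable F s t ↔ G.Vulnerable F' s t := by
  constructor
  · rintro ⟨r, l, H, hr, hl, hHF, LG, LH, hEG, hEH, hlt⟩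
    refine ⟨r, l, H ∩ F', hr, hl, Set.inter_subset_right, LG, LH,
      eqLat_mono G hsub hSP hEG,
      eqLat_mono G Set.inter_subset_left (SP_inter G hHF hSP) hEH, hlt⟩
  · rintro ⟨r, l, H, hr, hl, hHF', LG, LH, hEG, hEH, hlt⟩
    obtain ⟨l', hl', hEF, hpres⟩ := eqLat_extend G hsub hSP hl hEG
    exact ⟨r, l', H, hr, hl', hHF'.trans hsub, LG, LH, hEF, hpres H hHF' LH hEH, hlt⟩
end

section
/- Let C be a splittable simple cycle in an st-connected net. If f_{EN} ≤_C ℓ_{NX}, then there exists a neutral hyper-chord for C from the entry region E to the exit region X. -/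
namespace MultiDigraph

variable {V E : Type}

/-- A simple cycle based at `v` with edge list `p`: a nonempty closed walk
whose vertices (except the repeated endpoint) are all distinct. -/
def IsSimpleCycle (G : MultiDigraph V E) (v : V) (p : List E) : Prop :=
  G.IsWalk v p v ∧ p ≠ [] ∧ ((G.walkVerts v p).dropLast).Nodup

/-- The list of (distinct) vertices of a cycle. -/
def cycleVerts (G : MultiDigraph V E) (v : V) (p : List E) : List V :=
  (G.walkVerts v p).dropLast

/-- The set of vertices of a cycle. -/
def cycleSet (G : MultiDigraph V E) (v : V) (p : List E) : Set V :=
  {x | x ∈ G.cycleVerts v p}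

/-- `u` is an entry node of the vertex set `C`: `u ∈ C` and some simple path
from `s` to `u` meets `C` only in `u`. -/
def EntryNode (G : MultiDigraph V E) (s : V) (C : Set V) (u : V) : Prop :=
  u ∈ C ∧ ∃ q, G.IsSimplePath s q u ∧ ∀ x ∈ G.walkVerts s q, x ∈ C → x = u

/-- `u` is an exit node of the vertex set `C`: `u ∈ C` and some simple path
from `u` to `t` meets `C` only in `u`. -/
def ExitNode (G : MultiDigraph V E) (t : V) (C : Set V) (u : V) : Prop :=
  u ∈ C ∧ ∃ q, G.IsSimplePath u q t ∧ ∀ x ∈ G.walkVerts u q, x ∈ C → x = u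

/-- `q` is an entry path into `C` ending at `u`. -/
def IsEntryPath (G : MultiDigraph V E) (s : V) (C : Set V) (q : List E) (u : V) : Prop :=
  u ∈ C ∧ G.IsSimplePath s q u ∧ ∀ x ∈ G.walkVerts s q, x ∈ C → x = u

/-- `q` is an exit path from `C` starting at `u`. -/
def IsExitPath (G : MultiDigraph V E) (t : V) (C : Set V) (q : List E) (u : V) : Prop :=
  u ∈ C ∧ G.IsSimplePath u q t ∧ ∀ x ∈ G.walkVerts u q, x ∈ C → x = u

/-- Length of a shortest directed walk from `u` to `v`. -/
noncomputable def dist (G : MultiDigraph V E) (u v : V) : ℕ :=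
  sInf {n | ∃ p, G.IsWalk u p v ∧ p.length = n}

/-- `d_s(C)`: the minimum over `u ∈ C` of `dist s u`. -/
noncomputable def dS (G : MultiDigraph V E) (s : V) (C : Set V) : ℕ :=
  sInf {n | ∃ u ∈ C, G.dist s u = n}

/-- `d_t(C)`: the minimum over `u ∈ C` of `dist u t`. -/
noncomputable def dT (G : MultiDigraph V E) (t : V) (C : Set V) : ℕ :=
  sInf {n | ∃ u ∈ C, G.dist u t = n}

/-- An `s`-minimal cycle: a simple cycle whose distance from `s` is minimal
among all simple cycles of `G`. -/
def SMinimal (G : MultiDigraph V E) (s v : V) (p : List E) : Prop :=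
  G.IsSimpleCycle v p ∧
    ∀ v' p', G.IsSimpleCycle v' p' →
      G.dS s (G.cycleSet v p) ≤ G.dS s (G.cycleSet v' p')

end MultiDigraph

namespace MultiDigraph

variable {V E : Type} [DecidableEq V]

/-- The cycle `(v, p)`, as written, is splittable: every entry node occurs
no later than every exit node in the vertex list of the cycle. -/
def SplittableAt (G : MultiDigraph V E) (s t v : V) (p : List E) : Prop :=
  G.IsSimpleCycle v p ∧
    ∀ u w, G.EntryNode s (G.cycleSet v p) u → G.ExitNode t (G.cycleSet v p) w →
      (G.cycleVerts v p).idxOf u ≤ (G.cycleVerts v p).idxOf w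

/-- A cycle is splittable if some cyclic rewriting of it is splittable. -/
def Splittable (G : MultiDigraph V E) (s t v : V) (p : List E) : Prop :=
  G.IsSimpleCycle v p ∧ ∃ (n : ℕ) (v' : V), G.SplittableAt s t v' (p.rotate n)

/-- The entry region of a splittable cycle written starting at the first entry
node: vertices strictly before the first exit node `ξ1`. -/
def Ereg (G : MultiDigraph V E) (v : V) (p : List E) (ξ1 : V) : Set V :=
  {x | x ∈ G.cycleVerts v p ∧
    (G.cycleVerts v p).idxOf x < (G.cycleVerts v p).idxOf ξ1}

/-- The exit region: from the first exit node `ξ1` (excluded iff `ξ1` is the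
last entry node `lastE`) up to the last exit node `lastX`. -/
def Xreg (G : MultiDigraph V E) (v : V) (p : List E) (ξ1 lastE lastX : V) : Set V :=
  {x | x ∈ G.cycleVerts v p ∧
    (if ξ1 = lastE then (G.cycleVerts v p).idxOf ξ1 < (G.cycleVerts v p).idxOf x
      else (G.cycleVerts v p).idxOf ξ1 ≤ (G.cycleVerts v p).idxOf x) ∧
    (G.cycleVerts v p).idxOf x ≤ (G.cycleVerts v p).idxOf lastX}

/-- The neutral region: vertices strictly after the last exit node `lastX`. -/
def Nreg (G : MultiDigraph V E) (v : V) (p : List E) (lastX : V) : Set V :=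
  {x | x ∈ G.cycleVerts v p ∧
    (G.cycleVerts v p).idxOf lastX < (G.cycleVerts v p).idxOf x}

/-- Data of a splittable cycle written starting at its first entry node `v`,
with first exit node `ξ1`, last entry node `lastE` and last exit node `lastX`. -/
structure SplitData (G : MultiDigraph V E) (s t v : V) (p : List E)
    (ξ1 lastE lastX : V) : Prop where
  splitAt : G.SplittableAt s t v p
  base_entry : G.EntryNode s (G.cycleSet v p) v
  firstExit : G.ExitNode t (G.cycleSet v p) ξ1 ∧
    ∀ w, G.ExitNode t (G.cycleSet v p) w →
      (G.cycleVerts v p).idxOf ξ1 ≤ (G.cycleVerts v p).idxOf w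
  lastEntry : G.EntryNode s (G.cycleSet v p) lastE ∧
    ∀ u, G.EntryNode s (G.cycleSet v p) u →
      (G.cycleVerts v p).idxOf u ≤ (G.cycleVerts v p).idxOf lastE
  lastExit : G.ExitNode t (G.cycleSet v p) lastX ∧
    ∀ w, G.ExitNode t (G.cycleSet v p) w →
      (G.cycleVerts v p).idxOf w ≤ (G.cycleVerts v p).idxOf lastX

/-- A hyper-chord for the cycle `(v,p)` from `x` to `y`: a simple path between
two cycle vertices using at least one edge not on the cycle. -/
def HyperChord (G : MultiDigraph V E) (v : V) (p : List E) (x y : V)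
    (h : List E) : Prop :=
  x ∈ G.cycleSet v p ∧ y ∈ G.cycleSet v p ∧ G.IsSimplePath x h y ∧ ∃ e ∈ h, e ∉ p

/-- A neutral hyper-chord: all of its vertices lying on the cycle, other than
its extremes, belong to the neutral region `Nr`. -/
def NeutralHyperChord (G : MultiDigraph V E) (v : V) (p : List E) (x y : V)
    (h : List E) (Nr : Set V) : Prop :=
  G.HyperChord v p x y h ∧
    ∀ z ∈ G.walkVerts x h, z ∈ G.cycleSet v p → z = x ∨ z = y ∨ z ∈ Nr

/-- `f` is the target in the neutral region of a neutral hyper-chord from the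
entry region. -/
def TargetFromE (G : MultiDigraph V E) (v : V) (p : List E) (ξ1 lastX f : V) : Prop :=
  ∃ x ∈ G.Ereg v p ξ1, ∃ h, G.NeutralHyperChord v p x f h (G.Nreg v p lastX)

/-- `ℓ` is the source in the neutral region of a neutral hyper-chord to the
exit region. -/
def SourceToX (G : MultiDigraph V E) (v : V) (p : List E)
    (ξ1 lastE lastX ℓ : V) : Prop :=
  ∃ y ∈ G.Xreg v p ξ1 lastE lastX, ∃ h,
    G.NeutralHyperChord v p ℓ y h (G.Nreg v p lastX)

/-- The path `(u, q)` touches the splitter of the splittable cycle `(v,p)`: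
the splitter is the vertex `ξ1` if `ξ1 = lastE`, and otherwise the edge of the
cycle entering `ξ1`. -/
def TouchesSplitter (G : MultiDigraph V E) (p : List E) (ξ1 lastE u : V)
    (q : List E) : Prop :=
  (ξ1 = lastE ∧ ξ1 ∈ G.walkVerts u q) ∨
  (ξ1 ≠ lastE ∧ ∃ e ∈ q, e ∈ p ∧ G.tgt e = ξ1)

end MultiDigraph

namespace MultiDigraph

variable {V E : Type}

lemma isWalk_nil {G : MultiDigraph V E} {u w : V} (h : G.IsWalk u [] w) : u = w := h

lemma isWalk_append_s9 {G : MultiDigraph V E} {u m w : V} {q1 q2 : List E}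
    (h1 : G.IsWalk u q1 m) (h2 : G.IsWalk m q2 w) : G.IsWalk u (q1 ++ q2) w := by
  induction q1 generalizing u with
  | nil => rw [List.nil_append]; exact (isWalk_nil h1) ▸ h2
  | cons e q ih => exact ⟨h1.1, ih h1.2⟩

lemma walkVerts_ne_nil (G : MultiDigraph V E) (u : V) (q : List E) :
    G.walkVerts u q ≠ [] := by
  cases q <;> simp [walkVerts]

lemma start_mem_walkVerts (G : MultiDigraph V E) (u : V) (q : List E) :
    u ∈ G.walkVerts u q := by
  cases q <;> simp [walkVerts]

lemma walkVerts_length (G : MultiDigraph V E) (u : V) (q : List E) :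
    (G.walkVerts u q).length = q.length + 1 := by
  induction q generalizing u with
  | nil => rfl
  | cons e q ih => simp [walkVerts, ih]

lemma walkVerts_append {G : MultiDigraph V E} {u m : V} {q1 : List E} (q2 : List E)
    (h1 : G.IsWalk u q1 m) :
    G.walkVerts u (q1 ++ q2) = (G.walkVerts u q1).dropLast ++ G.walkVerts m q2 := by
  induction q1 generalizing u with
  | nil => rw [isWalk_nil h1]; simp [walkVerts]
  | cons e q ih =>
      have h2 := ih h1.2
      show u :: G.walkVerts (G.tgt e) (q ++ q2) = _
      rw [h2]
      show _ = (u :: G.walkVerts (G.tgt e) q).dropLast ++ _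
      rw [List.dropLast_cons_of_ne_nil (walkVerts_ne_nil G _ q)]
      simp

lemma walkVerts_getElem_zero (G : MultiDigraph V E) (u : V) (q : List E)
    (h : 0 < (G.walkVerts u q).length) : (G.walkVerts u q)[0] = u := by
  cases q <;> simp [walkVerts]

/-- The endpoints of the `i`-th edge of a walk are the `i`-th and `(i+1)`-st
vertices of the walk. -/
lemma walk_getElem {G : MultiDigraph V E} {u w : V} {q : List E}
    (h : G.IsWalk u q w) (i : ℕ) (hi : i < q.length) :
    G.src q[i] = (G.walkVerts u q)[i]'(by rw [walkVerts_length]; omega) ∧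
    G.tgt q[i] = (G.walkVerts u q)[i + 1]'(by rw [walkVerts_length]; omega) := by
  induction q generalizing u i with
  | nil => simp at hi
  | cons e q ih =>
      cases i with
      | zero =>
          refine ⟨by simpa [walkVerts] using h.1, ?_⟩
          show G.tgt e = (G.walkVerts (G.tgt e) q)[0]'(by rw [walkVerts_length]; omega)
          exact (walkVerts_getElem_zero _ _ _ _).symm
      | succ i =>
          have hi' : i < q.length := by simpa using hi
          exact (ih h.2 i hi')

lemma src_mem_walkVerts {G : MultiDigraph V E} {u w : V} {q : List E}
    (h : G.IsWalk u q w) {e : E} (he : e ∈ q) : G.src e ∈ G.walkVerts u q := by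
  induction q generalizing u with
  | nil => simp at he
  | cons e' q ih =>
      rcases List.mem_cons.1 he with rfl | he'
      · rw [h.1]; exact start_mem_walkVerts G u _
      · exact List.mem_cons_of_mem _ (ih h.2 he')

lemma tgt_mem_walkVerts {G : MultiDigraph V E} {u w : V} {q : List E}
    (h : G.IsWalk u q w) {e : E} (he : e ∈ q) : G.tgt e ∈ G.walkVerts u q := by
  induction q generalizing u with
  | nil => simp at he
  | cons e' q ih =>
      rcases List.mem_cons.1 he with rfl | he'
      · exact List.mem_cons_of_mem _ (start_mem_walkVerts G (G.tgt e) q)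
      · exact List.mem_cons_of_mem _ (ih h.2 he')

/-- From any occurrence of a vertex on a walk, the remaining portion of the
walk is a walk whose vertex list is a suffix. -/
lemma walk_suffix {G : MultiDigraph V E} :
    ∀ {q : List E} {u w z : V}, G.IsWalk u q w → z ∈ G.walkVerts u q →
    ∃ q2, G.IsWalk z q2 w ∧ (∀ e ∈ q2, e ∈ q) ∧
      G.walkVerts z q2 <:+ G.walkVerts u q := by
  intro q
  induction q with
  | nil =>
      intro u w z hw hz
      have : z = u := by simpa [walkVerts] using hz
      subst this
      exact ⟨[], hw, by simp, List.suffix_rfl⟩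
  | cons e q ih =>
      intro u w z hw hz
      rcases List.mem_cons.1 hz with rfl | hz'
      · exact ⟨e :: q, hw, fun _ h => h, List.suffix_rfl⟩
      · obtain ⟨q2, h1, h2, h3⟩ := ih hw.2 hz'
        exact ⟨q2, h1, fun e' he' => List.mem_cons_of_mem _ (h2 e' he'),
          h3.trans (List.suffix_cons u _)⟩

/-- Every walk contains a simple path between the same endpoints, using a
subset of its edges and vertices. -/
lemma exists_simple_path {G : MultiDigraph V E} :
    ∀ {q : List E} {u w : V}, G.IsWalk u q w →
    ∃ h, G.IsWalk u h w ∧ (G.walkVerts u h).Nodup ∧ (∀ e ∈ h, e ∈ q) ∧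
      (∀ z ∈ G.walkVerts u h, z ∈ G.walkVerts u q) := by
  intro q
  induction q with
  | nil =>
      intro u w hw
      exact ⟨[], hw, by simp [walkVerts], by simp, by simp⟩
  | cons e q ih =>
      intro u w hw
      obtain ⟨h', hwalk', hnd', hsub', hverts'⟩ := ih hw.2
      by_cases hu : u ∈ G.walkVerts (G.tgt e) h'
      · obtain ⟨q2, h1, h2, h3⟩ := walk_suffix hwalk' hu
        refine ⟨q2, h1, h3.sublist.nodup hnd', ?_, ?_⟩
        · exact fun e' he' => List.mem_cons_of_mem _ (hsub' e' (h2 e' he'))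
        · intro z hz
          exact List.mem_cons_of_mem _ (hverts' z (h3.subset hz))
      · refine ⟨e :: h', ⟨hw.1, hwalk'⟩, ?_, ?_, ?_⟩
        · show (u :: G.walkVerts (G.tgt e) h').Nodup
          exact List.nodup_cons.2 ⟨hu, hnd'⟩
        · intro e' he'
          rcases List.mem_cons.1 he' with rfl | he''
          · exact List.mem_cons_self
          · exact List.mem_cons_of_mem _ (hsub' e' he'')
        · intro z hz
          rcases List.mem_cons.1 hz with rfl | hz'
          · exact start_mem_walkVerts _ _ _
          · exact List.mem_cons_of_mem _ (hverts' z hz')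

/-- A segment of the cycle between positions `i ≤ j` is a walk along cycle
edges whose vertices are exactly the cycle vertices in positions `[i, j]`. -/
lemma cycle_segment {G : MultiDigraph V E} {v : V} {p : List E}
    (hw : G.IsWalk v p v) (hn : (G.cycleVerts v p).length = p.length) :
    ∀ (d i j : ℕ) (hj : j < p.length) (hij : i ≤ j) (_hd : j = i + d),
    ∃ seg, (∀ e ∈ seg, e ∈ p) ∧
      G.IsWalk ((G.cycleVerts v p)[i]'(lt_of_lt_of_eq (Nat.lt_of_le_of_lt hij hj) hn.symm))
        seg ((G.cycleVerts v p)[j]'(lt_of_lt_of_eq hj hn.symm)) ∧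
      ∀ z ∈ G.walkVerts ((G.cycleVerts v p)[i]'(lt_of_lt_of_eq (Nat.lt_of_le_of_lt hij hj) hn.symm)) seg,
        ∃ k, i ≤ k ∧ k ≤ j ∧ ∃ hk : k < (G.cycleVerts v p).length,
          z = (G.cycleVerts v p)[k] := by
  intro d
  induction d with
  | zero =>
      intro i j hj hij hd
      obtain rfl : i = j := by omega
      refine ⟨[], by simp, rfl, ?_⟩
      intro z hz
      have hz' : z = (G.cycleVerts v p)[i]'(lt_of_lt_of_eq (Nat.lt_of_le_of_lt hij hj) hn.symm) := by
        simpa [walkVerts] using hz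
      exact ⟨i, le_rfl, le_rfl, lt_of_lt_of_eq hj hn.symm, hz'⟩
  | succ d ih =>
      intro i j hj hij hd
      have hi1 : i < p.length := by omega
      have hgetcv : ∀ (k : ℕ) (hk : k < p.length),
          (G.walkVerts v p)[k]'(by rw [walkVerts_length]; omega) =
          (G.cycleVerts v p)[k]'(lt_of_lt_of_eq hk hn.symm) := by
        intro k hk
        exact (List.getElem_dropLast (lt_of_lt_of_eq hk hn.symm)).symm
      have h13 := walk_getElem hw i hi1
      obtain ⟨seg', hsub', hwalk', hverts'⟩ := ih (i + 1) j hj (by omega) (by omega)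
      have htgt : G.tgt p[i] = (G.cycleVerts v p)[i + 1]'(lt_of_lt_of_eq (show i + 1 < p.length by omega) hn.symm) := by
        rw [h13.2, hgetcv (i + 1) (by omega)]
      refine ⟨p[i] :: seg', ?_, ?_, ?_⟩
      · intro e he
        rcases List.mem_cons.1 he with rfl | he'
        · exact List.getElem_mem _
        · exact hsub' e he'
      · refine ⟨?_, ?_⟩
        · rw [h13.1, hgetcv i hi1]
        · rw [htgt]; exact hwalk'
      · intro z hz
        have hz' : z ∈ G.walkVerts (G.tgt p[i]) seg' ∨
            z = (G.cycleVerts v p)[i]'(lt_of_lt_of_eq hi1 hn.symm) := by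
          rcases List.mem_cons.1 hz with h | h
          · exact Or.inr h
          · exact Or.inl h
        rcases hz' with h | h
        · rw [htgt] at h
          obtain ⟨k, hk1, hk2, hk3, hk4⟩ := hverts' z h
          exact ⟨k, by omega, hk2, hk3, hk4⟩
        · exact ⟨i, le_rfl, by omega, lt_of_lt_of_eq hi1 hn.symm, h⟩

end MultiDigraph

open MultiDigraph in
/-- If `f_{EN} ≤_C ℓ_{NX}` (both existing in the neutral region, `f` being the
first target of a neutral hyper-chord from `E`, `ℓ` the last source of a
neutral hyper-chord to `X`), then there is a neutral hyper-chord from the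
entry region `E` to the exit region `X`. -/
theorem stmt9 {V E : Type} [DecidableEq V] (G : MultiDigraph V E)
    (s t v : V) (p : List E) (ξ1 lastE lastX : V)
    (hconn : G.STConnected s t)
    (hsd : G.SplitData s t v p ξ1 lastE lastX)
    (f ℓ : V)
    (hf : f ∈ G.Nreg v p lastX ∧ G.TargetFromE v p ξ1 lastX f ∧
      ∀ f' ∈ G.Nreg v p lastX, G.TargetFromE v p ξ1 lastX f' →
        (G.cycleVerts v p).idxOf f ≤ (G.cycleVerts v p).idxOf f')
    (hℓ : ℓ ∈ G.Nreg v p lastX ∧ G.SourceToX v p ξ1 lastE lastX ℓ ∧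
      ∀ ℓ' ∈ G.Nreg v p lastX, G.SourceToX v p ξ1 lastE lastX ℓ' →
        (G.cycleVerts v p).idxOf ℓ' ≤ (G.cycleVerts v p).idxOf ℓ)
    (hfl : (G.cycleVerts v p).idxOf f ≤ (G.cycleVerts v p).idxOf ℓ) :
    ∃ x ∈ G.Ereg v p ξ1, ∃ y ∈ G.Xreg v p ξ1 lastE lastX, ∃ h,
      G.NeutralHyperChord v p x y h (G.Nreg v p lastX) := by
  classical
  set cv := G.cycleVerts v p with hcvdef
  obtain ⟨hwalk, hpne, hnodup'⟩ := hsd.splitAt.1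
  have hnodup : cv.Nodup := hnodup'
  have hn : cv.length = p.length := by
    show (G.walkVerts v p).dropLast.length = p.length
    rw [List.length_dropLast, walkVerts_length]
    omega
  have hidx_lt : ∀ {z : V}, z ∈ cv → cv.idxOf z < cv.length :=
    fun h => List.idxOf_lt_length_iff.2 h
  have hget_idx : ∀ {z : V} (h : z ∈ cv), cv[cv.idxOf z]'(hidx_lt h) = z :=
    fun h => List.getElem_idxOf _
  have hidx_get : ∀ (k : ℕ) (hk : k < cv.length), cv.idxOf cv[k] = k := by
    intro k hk
    have hmem : cv[k] ∈ cv := List.getElem_mem _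
    exact (List.Nodup.getElem_inj_iff hnodup).1 (hget_idx hmem)
  obtain ⟨hfN, hfT, _⟩ := hf
  obtain ⟨hℓN, hℓS, _⟩ := hℓ
  obtain ⟨x, hxE, h1, hh1⟩ := hfT
  obtain ⟨y, hyX, h2, hh2⟩ := hℓS
  have hxcv : x ∈ cv := hxE.1
  have hac : cv.idxOf x < cv.idxOf ξ1 := hxE.2
  have hycv : y ∈ cv := hyX.1
  have hcb : cv.idxOf ξ1 ≤ cv.idxOf y := by
    have hif := hyX.2.1
    rw [← hcvdef] at hif
    by_cases hq : ξ1 = lastE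
    · rw [if_pos hq] at hif; omega
    · rw [if_neg hq] at hif; omega
  have hbd : cv.idxOf y ≤ cv.idxOf lastX := hyX.2.2
  have hfcv : f ∈ cv := hfN.1
  have hdF : cv.idxOf lastX < cv.idxOf f := hfN.2
  have hℓcv : ℓ ∈ cv := hℓN.1
  have hdL : cv.idxOf lastX < cv.idxOf ℓ := hℓN.2
  have hcd : cv.idxOf ξ1 ≤ cv.idxOf lastX := hsd.firstExit.2 lastX hsd.lastExit.1
  have hFn : cv.idxOf f < cv.length := hidx_lt hfcv
  have hLp : cv.idxOf ℓ < p.length := by rw [← hn]; exact hidx_lt hℓcv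
  -- the cycle segment from f to ℓ
  obtain ⟨seg, hsegsub, hsegwalk, hsegverts⟩ :=
    cycle_segment hwalk hn (cv.idxOf ℓ - cv.idxOf f) (cv.idxOf f) (cv.idxOf ℓ)
      hLp hfl (by omega)
  rw [hget_idx hfcv, hget_idx hℓcv] at hsegwalk
  rw [hget_idx hfcv] at hsegverts
  -- walks from the two hyper-chords
  have hw1 : G.IsWalk x h1 f := hh1.1.2.2.1.1
  have hw2 : G.IsWalk ℓ h2 y := hh2.1.2.2.1.1
  have hWwalk : G.IsWalk x (h1 ++ (seg ++ h2)) y :=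
    isWalk_append_s9 hw1 (isWalk_append_s9 hsegwalk hw2)
  obtain ⟨h, hhwalk, hhnd, hhsub, hhverts⟩ := exists_simple_path hWwalk
  have hWverts : ∀ z ∈ G.walkVerts x (h1 ++ (seg ++ h2)),
      z ∈ G.walkVerts x h1 ∨ z ∈ G.walkVerts f seg ∨ z ∈ G.walkVerts ℓ h2 := by
    intro z hz
    rw [walkVerts_append (seg ++ h2) hw1, walkVerts_append h2 hsegwalk] at hz
    rcases List.mem_append.1 hz with hz1 | hz'
    · exact Or.inl ((List.dropLast_sublist _).subset hz1)
    · rcases List.mem_append.1 hz' with hz2 | hz3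
      · exact Or.inr (Or.inl ((List.dropLast_sublist _).subset hz2))
      · exact Or.inr (Or.inr hz3)
  -- key vertex classification
  have hkey : ∀ z ∈ G.walkVerts x h, z ∈ cv → z = x ∨ z = y ∨ z ∈ G.Nreg v p lastX := by
    intro z hz hzcv
    rcases hWverts z (hhverts z hz) with h1v | hsegv | h2v
    · rcases hh1.2 z h1v hzcv with rfl | rfl | hN
      · exact Or.inl rfl
      · exact Or.inr (Or.inr hfN)
      · exact Or.inr (Or.inr hN)
    · obtain ⟨k, hk1, hk2, hk3, rfl⟩ := hsegverts z hsegv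
      refine Or.inr (Or.inr ⟨List.getElem_mem _, ?_⟩)
      show cv.idxOf lastX < cv.idxOf cv[k]
      rw [hidx_get k hk3]; omega
    · rcases hh2.2 z h2v hzcv with rfl | rfl | hN
      · exact Or.inr (Or.inr hℓN)
      · exact Or.inr (Or.inl rfl)
      · exact Or.inr (Or.inr hN)
  have hgetcv : ∀ (k : ℕ) (hk : k < p.length),
      (G.walkVerts v p)[k]'(by rw [walkVerts_length]; omega) =
      cv[k]'(lt_of_lt_of_eq hk hn.symm) :=
    fun k hk => (List.getElem_dropLast (lt_of_lt_of_eq hk hn.symm)).symm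
  -- the extracted simple path uses some non-cycle edge
  have hedge : ∃ e ∈ h, e ∉ p := by
    by_contra hall
    push_neg at hall
    have hxy : x ≠ y := by
      intro he
      have : cv.idxOf x = cv.idxOf y := by rw [he]
      omega
    cases h with
    | nil => exact hxy (isWalk_nil hhwalk)
    | cons e h' =>
      have hsrc : G.src e = x := hhwalk.1
      have hep : e ∈ p := hall e (List.mem_cons_self)
      obtain ⟨i, hi, hie⟩ := List.mem_iff_getElem.1 hep
      have h13 := walk_getElem hwalk i hi
      have hsrc13 := h13.1
      rw [hie, hsrc, hgetcv i hi] at hsrc13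
      have hia : cv.idxOf x = i := by
        rw [hsrc13]; exact hidx_get i (lt_of_lt_of_eq hi hn.symm)
      have hi1 : i + 1 < p.length := by omega
      have htgt13 := h13.2
      rw [hie, hgetcv (i + 1) hi1] at htgt13
      have htgtm : G.tgt e ∈ G.walkVerts x (e :: h') :=
        tgt_mem_walkVerts hhwalk (List.mem_cons_self)
      have htgtcv : G.tgt e ∈ cv := by
        rw [htgt13]; exact List.getElem_mem _
      have hidxtgt : cv.idxOf (G.tgt e) = i + 1 := by
        rw [htgt13]; exact hidx_get (i + 1) (lt_of_lt_of_eq hi1 hn.symm)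
      rcases hkey _ htgtm htgtcv with heq | heq | hN
      · rw [heq] at hidxtgt; omega
      · -- tgt e = y : locate the edge e on the concatenation
        rw [heq] at hidxtgt
        have heW : e ∈ h1 ∨ e ∈ seg ∨ e ∈ h2 := by
          have := hhsub e (List.mem_cons_self)
          simpa using this
        rcases heW with he1 | hes | he2
        · have hym : y ∈ G.walkVerts x h1 := by
            rw [← heq]; exact tgt_mem_walkVerts hw1 he1
          rcases hh1.2 y hym hycv with rfl | rfl | hN'
          · omega
          · omega
          · have : cv.idxOf lastX < cv.idxOf y := hN'.2
            omega
        · have hxm : x ∈ G.walkVerts f seg := by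
            rw [← hsrc]; exact src_mem_walkVerts hsegwalk hes
          obtain ⟨k, hk1, hk2, hk3, hkx⟩ := hsegverts x hxm
          have : cv.idxOf x = k := by rw [hkx]; exact hidx_get k hk3
          omega
        · have hxm : x ∈ G.walkVerts ℓ h2 := by
            rw [← hsrc]; exact src_mem_walkVerts hw2 he2
          rcases hh2.2 x hxm hxcv with heq' | heq' | hN'
          · have : cv.idxOf x = cv.idxOf ℓ := by rw [heq']
            omega
          · have : cv.idxOf x = cv.idxOf y := by rw [heq']
            omega
          · have : cv.idxOf lastX < cv.idxOf x := hN'.2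
            omega
      · have : cv.idxOf lastX < cv.idxOf (G.tgt e) := hN.2
        omega
  exact ⟨x, hxE, y, hyX, h, ⟨hxcv, hycv, ⟨hhwalk, hhnd⟩, hedge⟩, hkey⟩
end
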